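/- For every prime p > 3, the sum over k from 0 to p-1 of binom(4k,2k)*binom(2k,k) / 64^k is congruent to the Legendre symbol (-2/p) modulo p^2. -/

import Mathlib

open Finset

-- symmetric Vandermonde
lemma rv_vandermonde_sym (n k : ℕ) (hkn : k ≤ n) :
    (n+k).choose k = ∑ j ∈ range (n+1), n.choose j * k.choose j := by
  rw [Nat.add_choose_eq]
  rw [Finset.Nat.sum_antidiagonal_eq_sum_range_succ_mk]
  rw [← Finset.sum_subset (Finset.range_subset_range.mpr (by omega : k+1 ≤ n+1))]
  · apply Finset.sum_congr rfl
    intro i hi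
    simp only [Finset.mem_range] at hi
    rw [Nat.choose_symm (by omega : i ≤ k)]
  · intro j _ hj
    simp only [Finset.mem_range, not_lt] at hj
    rw [Nat.choose_eq_zero_of_lt (by omega : k < j), Nat.mul_zero]

lemma rv_inner_orth (n j : ℕ) (hj : j ≤ n) :
    ∑ k ∈ range (n+1), (-1:ℤ)^k * (n.choose k) * (k.choose j)
      = if j = n then (-1:ℤ)^n else 0 := by
  rw [← Finset.sum_range_add_sum_Ico _ (by omega : j ≤ n+1)]
  rw [Finset.sum_eq_zero (fun k hk => by
    simp only [Finset.mem_range] at hk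
    rw [Nat.choose_eq_zero_of_lt hk]
    push_cast; ring)]
  rw [zero_add, Finset.sum_Ico_eq_sum_range]
  rw [show n + 1 - j = (n - j) + 1 by omega]
  have step : ∀ i ∈ range (n - j + 1),
      (-1:ℤ)^(j+i) * (n.choose (j+i)) * ((j+i).choose j)
        = ((-1:ℤ)^j * n.choose j) * ((-1:ℤ)^i * ((n-j).choose i)) := by
    intro i hi
    simp only [Finset.mem_range] at hi
    have hmul : n.choose (j+i) * (j+i).choose j = n.choose j * (n-j).choose i := by
      have := Nat.choose_mul (n := n) (show j ≤ j+i by omega)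
      simpa [show j + i - j = i by omega] using this
    have hcast : ((n.choose (j+i) : ℤ)) * ((j+i).choose j) = (n.choose j : ℤ) * ((n-j).choose i) := by
      exact_mod_cast congrArg (Nat.cast (R := ℤ)) hmul
    calc (-1:ℤ)^(j+i) * (n.choose (j+i)) * ((j+i).choose j)
        = (-1:ℤ)^(j+i) * ((n.choose (j+i) : ℤ) * ((j+i).choose j)) := by ring
      _ = (-1:ℤ)^(j+i) * ((n.choose j : ℤ) * ((n-j).choose i)) := by rw [hcast]
      _ = ((-1:ℤ)^j * n.choose j) * ((-1:ℤ)^i * ((n-j).choose i)) := by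
          rw [pow_add]; ring
  rw [Finset.sum_congr rfl step, ← Finset.mul_sum, Int.alternating_sum_range_choose]
  rcases eq_or_lt_of_le hj with h | h
  · simp [h, if_pos, show n - n = 0 by omega]
  · rw [if_neg (by omega), if_neg (by omega)]
    ring

lemma rv_legendreP (n : ℕ) :
    ∑ k ∈ range (n+1), (-1:ℤ)^k * (n.choose k) * ((n+k).choose k) = (-1:ℤ)^n := by
  have e1 : ∀ k ∈ range (n+1), (-1:ℤ)^k * (n.choose k) * ((n+k).choose k)
      = ∑ j ∈ range (n+1), (-1:ℤ)^k * (n.choose k) * ((n.choose j : ℤ) * (k.choose j)) := by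
    intro k hk
    simp only [Finset.mem_range] at hk
    rw [rv_vandermonde_sym n k (by omega)]
    push_cast
    rw [Finset.mul_sum]
  rw [Finset.sum_congr rfl e1, Finset.sum_comm]
  have e2 : ∀ j ∈ range (n+1),
      ∑ k ∈ range (n+1), (-1:ℤ)^k * (n.choose k) * ((n.choose j : ℤ) * (k.choose j))
        = (n.choose j : ℤ) * (if j = n then (-1:ℤ)^n else 0) := by
    intro j hj
    simp only [Finset.mem_range] at hj
    rw [← rv_inner_orth n j (by omega), Finset.mul_sum]
    apply Finset.sum_congr rfl
    intro k _
    ring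
  rw [Finset.sum_congr rfl e2]
  rw [Finset.sum_eq_single n]
  · simp
  · intro b _ hb; rw [if_neg hb, mul_zero]
  · intro h; exact absurd (Finset.self_mem_range_succ n) h

lemma rv_sum_trunc (r N : ℕ) (h : r < N) :
    ∑ k ∈ range N, (-1:ℤ)^k * (r.choose k) * ((r+k).choose k) = (-1:ℤ)^r := by
  rw [← rv_legendreP r]
  symm
  apply Finset.sum_subset (Finset.range_subset_range.mpr (by omega))
  intro k _ hk
  simp only [Finset.mem_range, not_lt] at hk
  rw [Nat.choose_eq_zero_of_lt (by omega : r < k)]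
  push_cast; ring


lemma rv_prod_desc (r : ℕ) : ∀ k : ℕ, ∏ j ∈ range k, ((r:ℤ) - j) = (k.factorial : ℤ) * (r.choose k) := by
  intro k
  induction k with
  | zero => simp
  | succ k ih =>
    rw [Finset.prod_range_succ, ih]
    have key : ((k+1).factorial : ℤ) * (r.choose (k+1)) = (k.factorial : ℤ) * (r.choose k) * ((r:ℤ) - k) := by
      rcases le_or_gt k r with h | h
      · have hn := Nat.choose_succ_right_eq r k
        have hc : ((r.choose (k+1) : ℤ)) * (k+1) = (r.choose k : ℤ) * ((r:ℤ) - k) := by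
          have : ((r.choose (k+1) * (k+1) : ℕ) : ℤ) = ((r.choose k * (r - k) : ℕ) : ℤ) := by
            exact_mod_cast congrArg (Nat.cast (R := ℤ)) hn
          push_cast [h] at this
          linarith
        have : ((k+1).factorial : ℤ) = (k.factorial : ℤ) * (k+1) := by
          push_cast [Nat.factorial_succ]; ring
        rw [this]
        calc (k.factorial : ℤ) * (k+1) * (r.choose (k+1))
            = (k.factorial : ℤ) * ((r.choose (k+1) : ℤ) * (k+1)) := by ring
          _ = (k.factorial : ℤ) * ((r.choose k : ℤ) * ((r:ℤ) - k)) := by rw [hc]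
          _ = (k.factorial : ℤ) * (r.choose k) * ((r:ℤ) - k) := by ring
      · rw [Nat.choose_eq_zero_of_lt (by omega : r < k+1)]
        rcases eq_or_lt_of_le (by omega : r ≤ k) with h2 | h2
        · rw [← h2]; push_cast; ring
        · rw [Nat.choose_eq_zero_of_lt h2]; push_cast; ring
    rw [key]

lemma rv_prod_asc (r : ℕ) : ∀ k : ℕ, ∏ j ∈ range k, ((r:ℤ) + j + 1) = (k.factorial : ℤ) * ((r+k).choose k) := by
  intro k
  induction k with
  | zero => simp
  | succ k ih =>
    rw [Finset.prod_range_succ, ih]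
    have hn := Nat.add_one_mul_choose_eq (r+k) k
    have key : ((k+1).factorial : ℤ) * ((r+(k+1)).choose (k+1)) = (k.factorial : ℤ) * ((r+k).choose k) * ((r:ℤ) + k + 1) := by
      have hc : (((r+k+1).choose (k+1) : ℤ)) * (k+1) = ((r+k).choose k : ℤ) * ((r:ℤ)+k+1) := by
        have : (((r+k).succ * (r+k).choose k : ℕ) : ℤ) = (((r+k).succ.choose (k.succ) * (k.succ) : ℕ) : ℤ) := by
          exact_mod_cast congrArg (Nat.cast (R := ℤ)) hn
        push_cast [Nat.succ_eq_add_one] at this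
        linarith
      have hf : ((k+1).factorial : ℤ) = (k.factorial : ℤ) * (k+1) := by
        push_cast [Nat.factorial_succ]; ring
      rw [hf]
      calc (k.factorial : ℤ) * (k+1) * ((r+(k+1)).choose (k+1))
          = (k.factorial : ℤ) * (((r+(k+1)).choose (k+1) : ℤ) * (k+1)) := by ring
        _ = (k.factorial : ℤ) * (((r+k).choose k : ℤ) * ((r:ℤ)+k+1)) := by
            rw [show r + (k+1) = r + k + 1 by ring]; rw [hc]
        _ = (k.factorial : ℤ) * ((r+k).choose k) * ((r:ℤ) + k + 1) := by ring
    rw [key]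


lemma rv_fact4 : ∀ m : ℕ, (m+4).factorial = (m+4)*(m+3)*(m+2)*(m+1)*m.factorial := by
  intro m
  rw [show m+4 = m+3+1 by ring, Nat.factorial_succ,
      show m+3 = m+2+1 by ring, Nat.factorial_succ,
      show m+2 = m+1+1 by ring, Nat.factorial_succ, Nat.factorial_succ]
  ring

lemma rv_fact2 : ∀ m : ℕ, (m+2).factorial = (m+2)*(m+1)*m.factorial := by
  intro m
  rw [show m+2 = m+1+1 by ring, Nat.factorial_succ, Nat.factorial_succ]
  ring

lemma rv_nid (k : ℕ) :
    (4*k+4).choose (2*k+2) * ((2*k+2).choose (k+1)) * ((k+1)*(k+1))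
      = (4*k).choose (2*k) * ((2*k).choose k) * (4*(4*k+1)*(4*k+3)) := by
  have key : (((4*k+4).choose (2*k+2) * ((2*k+2).choose (k+1)) * ((k+1)*(k+1)) : ℕ) : ℚ)
      = (((4*k).choose (2*k) * ((2*k).choose k) * (4*(4*k+1)*(4*k+3)) : ℕ) : ℚ) := by
    have e1 : (((4*k+4).choose (2*k+2)) : ℚ) = ((4*k+4).factorial : ℚ) / ((2*k+2).factorial * (2*k+2).factorial) := by
      rw [Nat.cast_choose ℚ (by omega : 2*k+2 ≤ 4*k+4), show 4*k+4 - (2*k+2) = 2*k+2 by omega]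
    have e2 : (((2*k+2).choose (k+1)) : ℚ) = ((2*k+2).factorial : ℚ) / ((k+1).factorial * (k+1).factorial) := by
      rw [Nat.cast_choose ℚ (by omega : k+1 ≤ 2*k+2), show 2*k+2 - (k+1) = k+1 by omega]
    have e3 : (((4*k).choose (2*k)) : ℚ) = ((4*k).factorial : ℚ) / ((2*k).factorial * (2*k).factorial) := by
      rw [Nat.cast_choose ℚ (by omega : 2*k ≤ 4*k), show 4*k - 2*k = 2*k by omega]
    have e4 : (((2*k).choose k) : ℚ) = ((2*k).factorial : ℚ) / (k.factorial * k.factorial) := by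
      rw [Nat.cast_choose ℚ (by omega : k ≤ 2*k), show 2*k - k = k by omega]
    have F1 : ((4*k+4).factorial : ℚ) = (4*k+4)*(4*k+3)*(4*k+2)*(4*k+1)*((4*k).factorial : ℚ) := by
      rw [rv_fact4 (4*k)]; push_cast; ring
    have F2 : ((2*k+2).factorial : ℚ) = (2*k+2)*(2*k+1)*((2*k).factorial : ℚ) := by
      rw [rv_fact2 (2*k)]; push_cast; ring
    have F3 : ((k+1).factorial : ℚ) = (k+1)*(k.factorial : ℚ) := by
      rw [Nat.factorial_succ]; push_cast; ring
    push_cast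
    rw [e1, e2, e3, e4, F1, F2, F3]
    have nz1 : ((4*k).factorial : ℚ) ≠ 0 := Nat.cast_ne_zero.mpr (Nat.factorial_ne_zero _)
    have nz2 : ((2*k).factorial : ℚ) ≠ 0 := Nat.cast_ne_zero.mpr (Nat.factorial_ne_zero _)
    have nz3 : ((k).factorial : ℚ) ≠ 0 := Nat.cast_ne_zero.mpr (Nat.factorial_ne_zero _)
    have nz4 : ((2:ℚ)*k+2) ≠ 0 := by positivity
    have nz5 : ((2:ℚ)*k+1) ≠ 0 := by positivity
    have nz6 : ((k:ℚ)+1) ≠ 0 := by positivity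
    field_simp
    ring
  exact_mod_cast key

open Finset Polynomial

variable {R : Type*} [CommRing R]

def rvg (k : ℕ) (x : R) : R :=
  (∏ j ∈ range k, (x - (j:ℕ))) * (∏ j ∈ range k, (x + (j:ℕ) + 1))

noncomputable def rvG (k : ℕ) : Polynomial R :=
  (∏ j ∈ range k, (X - Polynomial.C ((j:ℕ) : R))) *
  (∏ j ∈ range k, (X + Polynomial.C ((j:ℕ) : R) + 1))

lemma rvG_eval (k : ℕ) (x : R) : (rvG k).eval x = rvg k x := by
  simp [rvG, rvg, eval_prod]

lemma rvg_succ (k : ℕ) (x : R) :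
    rvg (k+1) x = rvg k x * ((x - (k:ℕ)) * (x + (k:ℕ) + 1)) := by
  unfold rvg
  rw [prod_range_succ, prod_range_succ]
  ring

lemma rvg_symm (k : ℕ) (x : R) : rvg k (-1 - x) = rvg k x := by
  unfold rvg
  have e1 : ∏ j ∈ range k, ((-1 - x) - (j:ℕ)) = (-1:R)^k * ∏ j ∈ range k, (x + (j:ℕ) + 1) := by
    calc ∏ j ∈ range k, ((-1 - x) - (j:ℕ))
        = ∏ j ∈ range k, (-1) * (x + (j:ℕ) + 1) := prod_congr rfl (fun j _ => by ring)
      _ = (-1:R)^k * ∏ j ∈ range k, (x + (j:ℕ) + 1) := by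
          rw [prod_mul_distrib, prod_const, card_range]
  have e2 : ∏ j ∈ range k, ((-1 - x) + (j:ℕ) + 1) = (-1:R)^k * ∏ j ∈ range k, (x - (j:ℕ)) := by
    calc ∏ j ∈ range k, ((-1 - x) + (j:ℕ) + 1)
        = ∏ j ∈ range k, (-1) * (x - (j:ℕ)) := prod_congr rfl (fun j _ => by ring)
      _ = (-1:R)^k * ∏ j ∈ range k, (x - (j:ℕ)) := by
          rw [prod_mul_distrib, prod_const, card_range]
  rw [e1, e2]
  have h11 : (-1:R)^k * (-1:R)^k = 1 := by
    rw [← pow_add, ← two_mul, pow_mul]; norm_num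
  calc (-1:R)^k * (∏ j ∈ range k, (x + (j:ℕ) + 1)) * ((-1:R)^k * ∏ j ∈ range k, (x - (j:ℕ)))
      = ((-1:R)^k * (-1:R)^k) * ((∏ j ∈ range k, (x - (j:ℕ))) * ∏ j ∈ range k, (x + (j:ℕ) + 1)) := by
        ring
    _ = (∏ j ∈ range k, (x - (j:ℕ))) * ∏ j ∈ range k, (x + (j:ℕ) + 1) := by
        rw [h11, one_mul]


lemma rvg_nat (r k : ℕ) :
    rvg k ((r : ℕ) : R) = (k.factorial : R)^2 * (r.choose k : R) * ((r+k).choose k : R) := by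
  unfold rvg
  have e1 : ∏ j ∈ range k, (((r:ℕ):R) - ((j:ℕ):R)) = (k.factorial : R) * (r.choose k : R) := by
    have h := congrArg (fun z : ℤ => (z : R)) (rv_prod_desc r k)
    push_cast at h
    exact h
  have e2 : ∏ j ∈ range k, (((r:ℕ):R) + ((j:ℕ):R) + 1) = (k.factorial : R) * ((r+k).choose k : R) := by
    have h := congrArg (fun z : ℤ => (z : R)) (rv_prod_asc r k)
    push_cast at h
    exact h
  rw [e1, e2]
  ring

section Main

open Finset Polynomial

lemma rv_main (p : ℕ) (hp : p.Prime) (hp3 : 3 < p) (r r' δ δ' : ℕ)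
    (h1 : 4*r+1 = δ*p) (h2 : 4*r'+3 = δ'*p) (h3 : δ + δ' = 4) :
    (∑ k ∈ Finset.range p,
      ((Nat.choose (4 * k) (2 * k) : ZMod (p ^ 2)) * (Nat.choose (2 * k) k : ZMod (p ^ 2)) *
        ((64 : ZMod (p ^ 2))⁻¹) ^ k))
      = (((-1:ℤ)^r : ℤ) : ZMod (p ^ 2)) := by
  have hp2 : p ≠ 2 := by omega
  -- arithmetic
  have hδ0 : δ ≠ 0 := by rintro rfl; omega
  have hδ'0 : δ' ≠ 0 := by rintro rfl; omega
  have hsum4 : (4*r+1) + (4*r'+3) = 4 * p := by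
    have e : (4*r+1) + (4*r'+3) = (δ + δ') * p := by rw [h1, h2]; ring
    rw [h3] at e; exact e
  have hrr' : r + r' + 1 = p := by omega
  have hr : r < p := by omega
  have hr' : r' < p := by omega
  -- units
  have hunit : ∀ a : ℕ, ¬ p ∣ a → IsUnit ((a : ℕ) : ZMod (p^2)) := by
    intro a ha
    rw [ZMod.isUnit_iff_coprime]
    exact ((hp.coprime_iff_not_dvd.mpr ha).symm).pow_right 2
  have hnd2 : ∀ m : ℕ, ¬ p ∣ 2^m := by
    intro m hdvd
    have h2d : p ∣ 2 := hp.dvd_of_dvd_pow hdvd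
    have := (Nat.prime_dvd_prime_iff_eq hp Nat.prime_two).mp h2d
    omega
  have u64 : IsUnit (64 : ZMod (p^2)) := by
    have := hunit 64 (by simpa using hnd2 6)
    exact_mod_cast this
  have u4 : IsUnit (4 : ZMod (p^2)) := by
    have := hunit 4 (by simpa using hnd2 2)
    exact_mod_cast this
  have ufact : ∀ k, k < p → IsUnit ((k.factorial : ℕ) : ZMod (p^2)) := by
    intro k hk
    apply hunit
    rw [Nat.Prime.dvd_factorial hp]
    omega
  -- p-nilpotency
  have hpsq : ((p : ZMod (p^2)))^2 = 0 := by
    have h := ZMod.natCast_self (p^2)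
    push_cast at h
    exact h
  have hpp : (p : ZMod (p^2)) * (p : ZMod (p^2)) = 0 := by
    linear_combination hpsq
  -- x₀
  obtain ⟨x₀, hx₀def⟩ : ∃ x : ZMod (p^2), x = -(4 : ZMod (p^2))⁻¹ := ⟨_, rfl⟩
  have h4x₀ : (4 : ZMod (p^2)) * x₀ = -1 := by
    rw [hx₀def, mul_neg, ZMod.mul_inv_of_unit _ u4]
  -- step 1 : the term identity
  have step1 : ∀ k, k < p →
      ((k.factorial : ZMod (p^2)))^2 * ((4*k).choose (2*k) : ZMod (p^2)) * ((2*k).choose k : ZMod (p^2))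
        = (-1)^k * rvg k x₀ * (64 : ZMod (p^2))^k := by
    intro k
    induction k with
    | zero => intro _; simp [rvg]
    | succ k ih =>
      intro hk1
      have hk : k < p := by omega
      have IH := ih hk
      have hku : IsUnit (((k+1 : ℕ)) : ZMod (p^2)) := hunit (k+1) (by
        intro hdvd
        have := Nat.le_of_dvd (by omega) hdvd
        omega)
      have nidc : (((4*k+4).choose (2*k+2) : ZMod (p^2))) * (((2*k+2).choose (k+1) : ZMod (p^2))) * (((k:ZMod (p^2))+1))^2
          = (((4*k).choose (2*k) : ZMod (p^2))) * (((2*k).choose k : ZMod (p^2))) * (4*(4*(k:ZMod (p^2))+1)*(4*(k:ZMod (p^2))+3)) := by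
        have hc := congrArg (fun z : ℕ => (z : ZMod (p^2))) (rv_nid k)
        push_cast at hc
        linear_combination hc
      rw [show 4*(k+1) = 4*k+4 by ring, show 2*(k+1) = 2*k+2 by ring, rvg_succ]
      have hfs : (((k+1).factorial : ZMod (p^2))) = ((k:ZMod (p^2))+1) * ((k.factorial : ZMod (p^2))) := by
        rw [Nat.factorial_succ]; push_cast; ring
      rw [hfs]
      apply (hku.pow 2).mul_left_cancel
      push_cast
      linear_combination
        (((k.factorial : ZMod (p^2)))^2 * ((k:ZMod (p^2))+1)^2) * nidc
        + (((k:ZMod (p^2))+1)^2 * (4*(4*(k:ZMod (p^2))+1)*(4*(k:ZMod (p^2))+3))) * IH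
        + (((k:ZMod (p^2))+1)^2 * (-1:ZMod (p^2))^k * (rvg k x₀) * (64:ZMod (p^2))^k * (4*(4*x₀+3))) * h4x₀
  -- term form with inverses
  have hterm : ∀ k ∈ range p,
      ((Nat.choose (4 * k) (2 * k) : ZMod (p ^ 2)) * (Nat.choose (2 * k) k : ZMod (p ^ 2)) *
        ((64 : ZMod (p ^ 2))⁻¹) ^ k)
      = (((k.factorial : ZMod (p^2)))^2)⁻¹ * ((-1)^k * rvg k x₀) := by
    intro k hk
    have hk' : k < p := mem_range.mp hk
    have hfu : IsUnit (((k.factorial : ZMod (p^2)))^2) := by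
      exact ((ufact k hk').pow 2)
    apply hfu.mul_left_cancel
    have hι : ((k.factorial : ZMod (p^2)))^2 * ((((k.factorial : ZMod (p^2)))^2)⁻¹ * ((-1)^k * rvg k x₀))
        = (-1)^k * rvg k x₀ := by
      rw [← mul_assoc, ZMod.mul_inv_of_unit _ hfu, one_mul]
    rw [hι]
    calc ((k.factorial : ZMod (p^2)))^2 *
          ((Nat.choose (4 * k) (2 * k) : ZMod (p ^ 2)) * (Nat.choose (2 * k) k : ZMod (p ^ 2)) *
            ((64 : ZMod (p ^ 2))⁻¹) ^ k)
        = (((k.factorial : ZMod (p^2)))^2 * ((4*k).choose (2*k) : ZMod (p^2)) * ((2*k).choose k : ZMod (p^2)))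
            * ((64 : ZMod (p ^ 2))⁻¹) ^ k := by ring
      _ = ((-1)^k * rvg k x₀ * (64 : ZMod (p^2))^k) * ((64 : ZMod (p ^ 2))⁻¹) ^ k := by
          rw [step1 k hk']
      _ = ((-1)^k * rvg k x₀) * ((64 : ZMod (p^2)) * (64 : ZMod (p ^ 2))⁻¹) ^ k := by
          rw [mul_pow]; ring
      _ = (-1)^k * rvg k x₀ := by
          rw [ZMod.mul_inv_of_unit _ u64, one_pow, mul_one]
  -- t and t'
  obtain ⟨x₁, hx₁def⟩ : ∃ x : ZMod (p^2), x = -1 - x₀ := ⟨_, rfl⟩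
  obtain ⟨t, htdef⟩ : ∃ x : ZMod (p^2), x = x₀ - ((r:ℕ) : ZMod (p^2)) := ⟨_, rfl⟩
  obtain ⟨t', ht'def⟩ : ∃ x : ZMod (p^2), x = x₁ - ((r':ℕ) : ZMod (p^2)) := ⟨_, rfl⟩
  have hcast1 : (4:ZMod (p^2))*((r:ℕ) : ZMod (p^2)) + 1 = ((δ:ℕ) : ZMod (p^2)) * ((p:ℕ) : ZMod (p^2)) := by
    have hc := congrArg (fun z : ℕ => (z : ZMod (p^2))) h1
    push_cast at hc
    linear_combination hc
  have hcast2 : (4:ZMod (p^2))*((r':ℕ) : ZMod (p^2)) + 3 = ((δ':ℕ) : ZMod (p^2)) * ((p:ℕ) : ZMod (p^2)) := by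
    have hc := congrArg (fun z : ℕ => (z : ZMod (p^2))) h2
    push_cast at hc
    linear_combination hc
  have ht4 : (4:ZMod (p^2)) * t = -(((δ:ℕ) : ZMod (p^2)) * ((p:ℕ) : ZMod (p^2))) := by
    rw [htdef]
    linear_combination h4x₀ - hcast1
  have ht4' : (4:ZMod (p^2)) * t' = -(((δ':ℕ) : ZMod (p^2)) * ((p:ℕ) : ZMod (p^2))) := by
    rw [ht'def, hx₁def]
    linear_combination (-1 : ZMod (p^2)) * h4x₀ - hcast2
  have htp : t * ((p:ℕ) : ZMod (p^2)) = 0 := by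
    apply u4.mul_left_cancel
    calc (4:ZMod (p^2)) * (t * ((p:ℕ) : ZMod (p^2)))
        = ((4:ZMod (p^2)) * t) * ((p:ℕ) : ZMod (p^2)) := by ring
      _ = -(((δ:ℕ) : ZMod (p^2)) * (((p:ℕ) : ZMod (p^2)) * ((p:ℕ) : ZMod (p^2)))) := by
          rw [ht4]; ring
      _ = 0 := by rw [hpp]; ring
      _ = (4:ZMod (p^2)) * 0 := by ring
  have ht2 : t * t = 0 := by
    apply (u4.pow 2).mul_left_cancel
    calc (4:ZMod (p^2))^2 * (t * t)
        = ((4:ZMod (p^2)) * t) * ((4:ZMod (p^2)) * t) := by ring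
      _ = (((δ:ℕ) : ZMod (p^2)) * ((δ:ℕ) : ZMod (p^2))) * (((p:ℕ) : ZMod (p^2)) * ((p:ℕ) : ZMod (p^2))) := by
          rw [ht4]; ring
      _ = 0 := by rw [hpp]; ring
      _ = (4:ZMod (p^2))^2 * 0 := by ring
  have ht2' : t' * t' = 0 := by
    apply (u4.pow 2).mul_left_cancel
    calc (4:ZMod (p^2))^2 * (t' * t')
        = ((4:ZMod (p^2)) * t') * ((4:ZMod (p^2)) * t') := by ring
      _ = (((δ':ℕ) : ZMod (p^2)) * ((δ':ℕ) : ZMod (p^2))) * (((p:ℕ) : ZMod (p^2)) * ((p:ℕ) : ZMod (p^2))) := by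
          rw [ht4']; ring
      _ = 0 := by rw [hpp]; ring
      _ = (4:ZMod (p^2))^2 * 0 := by ring
  -- expansions
  have hexp : ∀ k : ℕ, rvg k x₀ = rvg k ((r:ℕ) : ZMod (p^2))
      + t * ((Polynomial.derivative (rvG k)).eval ((r:ℕ) : ZMod (p^2))) := by
    intro k
    obtain ⟨c, hc⟩ := (rvG k).binomExpansion ((r:ℕ) : ZMod (p^2)) t
    have hx : ((r:ℕ) : ZMod (p^2)) + t = x₀ := by rw [htdef]; ring
    calc rvg k x₀ = (rvG k).eval (((r:ℕ) : ZMod (p^2)) + t) := by rw [hx, rvG_eval]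
      _ = (rvG k).eval ((r:ℕ) : ZMod (p^2))
          + (Polynomial.derivative (rvG k)).eval ((r:ℕ) : ZMod (p^2)) * t + c * t^2 := hc
      _ = rvg k ((r:ℕ) : ZMod (p^2)) + t * ((Polynomial.derivative (rvG k)).eval ((r:ℕ) : ZMod (p^2))) := by
          rw [rvG_eval]; linear_combination c * ht2
  have hexp' : ∀ k : ℕ, rvg k x₀ = rvg k ((r':ℕ) : ZMod (p^2))
      + t' * ((Polynomial.derivative (rvG k)).eval ((r':ℕ) : ZMod (p^2))) := by
    intro k
    obtain ⟨c, hc⟩ := (rvG k).binomExpansion ((r':ℕ) : ZMod (p^2)) t'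
    have hx : ((r':ℕ) : ZMod (p^2)) + t' = x₁ := by rw [ht'def]; ring
    calc rvg k x₀ = rvg k (-1 - x₀) := (rvg_symm k x₀).symm
      _ = rvg k x₁ := by rw [hx₁def]
      _ = (rvG k).eval (((r':ℕ) : ZMod (p^2)) + t') := by rw [hx, rvG_eval]
      _ = (rvG k).eval ((r':ℕ) : ZMod (p^2))
          + (Polynomial.derivative (rvG k)).eval ((r':ℕ) : ZMod (p^2)) * t' + c * t'^2 := hc
      _ = rvg k ((r':ℕ) : ZMod (p^2)) + t' * ((Polynomial.derivative (rvG k)).eval ((r':ℕ) : ZMod (p^2))) := by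
          rw [rvG_eval]; linear_combination c * ht2'
  -- gamma : p * h = - p * h'
  have hcastp : ((r:ℕ) : ZMod (p^2)) + ((r':ℕ) : ZMod (p^2)) + 1 = ((p:ℕ) : ZMod (p^2)) := by
    have hc := congrArg (fun z : ℕ => (z : ZMod (p^2))) hrr'
    push_cast at hc
    linear_combination hc
  have hgamma : ∀ k : ℕ,
      ((p:ℕ) : ZMod (p^2)) * ((Polynomial.derivative (rvG k)).eval ((r:ℕ) : ZMod (p^2)))
        = -(((p:ℕ) : ZMod (p^2)) * ((Polynomial.derivative (rvG k)).eval ((r':ℕ) : ZMod (p^2)))) := by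
    intro k
    obtain ⟨c1, hc1⟩ := (rvG k).binomExpansion ((r':ℕ) : ZMod (p^2)) (-((p:ℕ) : ZMod (p^2)))
    obtain ⟨c2, hc2⟩ := (rvG k).binomExpansion ((r':ℕ) : ZMod (p^2)) (-(2*((p:ℕ) : ZMod (p^2))))
    obtain ⟨c3, hc3⟩ := (rvG k).binomExpansion ((r:ℕ) : ZMod (p^2)) ((p:ℕ) : ZMod (p^2))
    have hz1 : (-((p:ℕ) : ZMod (p^2)))^2 = 0 := by linear_combination hpsq
    have hz2 : (-(2*((p:ℕ) : ZMod (p^2))))^2 = 0 := by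
      linear_combination (4 : ZMod (p^2)) * hpsq
    have hz3 : (((p:ℕ) : ZMod (p^2)))^2 = 0 := hpsq
    have hpt0 : (-1 : ZMod (p^2)) - ((r:ℕ) : ZMod (p^2)) = ((r':ℕ) : ZMod (p^2)) + (-((p:ℕ) : ZMod (p^2))) := by
      linear_combination -hcastp
    have hpt1 : (-1 : ZMod (p^2)) - (((r:ℕ) : ZMod (p^2)) + ((p:ℕ) : ZMod (p^2)))
        = ((r':ℕ) : ZMod (p^2)) + (-(2*((p:ℕ) : ZMod (p^2)))) := by
      linear_combination -hcastp
    have E0 : rvg k ((r:ℕ) : ZMod (p^2)) = rvg k ((r':ℕ) : ZMod (p^2))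
        - ((p:ℕ) : ZMod (p^2)) * ((Polynomial.derivative (rvG k)).eval ((r':ℕ) : ZMod (p^2))) := by
      calc rvg k ((r:ℕ) : ZMod (p^2)) = rvg k (-1 - ((r:ℕ) : ZMod (p^2))) := (rvg_symm _ _).symm
        _ = rvg k (((r':ℕ) : ZMod (p^2)) + (-((p:ℕ) : ZMod (p^2)))) := by rw [hpt0]
        _ = (rvG k).eval (((r':ℕ) : ZMod (p^2)) + (-((p:ℕ) : ZMod (p^2)))) := (rvG_eval _ _).symm
        _ = (rvG k).eval ((r':ℕ) : ZMod (p^2))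
            + (Polynomial.derivative (rvG k)).eval ((r':ℕ) : ZMod (p^2)) * (-((p:ℕ) : ZMod (p^2)))
            + c1 * (-((p:ℕ) : ZMod (p^2)))^2 := hc1
        _ = rvg k ((r':ℕ) : ZMod (p^2))
            - ((p:ℕ) : ZMod (p^2)) * ((Polynomial.derivative (rvG k)).eval ((r':ℕ) : ZMod (p^2))) := by
            rw [rvG_eval, hz1]; ring
    have E1 : rvg k (((r:ℕ) : ZMod (p^2)) + ((p:ℕ) : ZMod (p^2))) = rvg k ((r':ℕ) : ZMod (p^2))
        - 2*((p:ℕ) : ZMod (p^2)) * ((Polynomial.derivative (rvG k)).eval ((r':ℕ) : ZMod (p^2))) := by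
      calc rvg k (((r:ℕ) : ZMod (p^2)) + ((p:ℕ) : ZMod (p^2)))
          = rvg k (-1 - (((r:ℕ) : ZMod (p^2)) + ((p:ℕ) : ZMod (p^2)))) := (rvg_symm _ _).symm
        _ = rvg k (((r':ℕ) : ZMod (p^2)) + (-(2*((p:ℕ) : ZMod (p^2))))) := by rw [hpt1]
        _ = (rvG k).eval (((r':ℕ) : ZMod (p^2)) + (-(2*((p:ℕ) : ZMod (p^2))))) := (rvG_eval _ _).symm
        _ = (rvG k).eval ((r':ℕ) : ZMod (p^2))
            + (Polynomial.derivative (rvG k)).eval ((r':ℕ) : ZMod (p^2)) * (-(2*((p:ℕ) : ZMod (p^2))))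
            + c2 * (-(2*((p:ℕ) : ZMod (p^2))))^2 := hc2
        _ = rvg k ((r':ℕ) : ZMod (p^2))
            - 2*((p:ℕ) : ZMod (p^2)) * ((Polynomial.derivative (rvG k)).eval ((r':ℕ) : ZMod (p^2))) := by
            rw [rvG_eval, hz2]; ring
    have E2 : rvg k (((r:ℕ) : ZMod (p^2)) + ((p:ℕ) : ZMod (p^2))) = rvg k ((r:ℕ) : ZMod (p^2))
        + ((p:ℕ) : ZMod (p^2)) * ((Polynomial.derivative (rvG k)).eval ((r:ℕ) : ZMod (p^2))) := by
      calc rvg k (((r:ℕ) : ZMod (p^2)) + ((p:ℕ) : ZMod (p^2)))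
          = (rvG k).eval (((r:ℕ) : ZMod (p^2)) + ((p:ℕ) : ZMod (p^2))) := (rvG_eval _ _).symm
        _ = (rvG k).eval ((r:ℕ) : ZMod (p^2))
            + (Polynomial.derivative (rvG k)).eval ((r:ℕ) : ZMod (p^2)) * (((p:ℕ) : ZMod (p^2)))
            + c3 * (((p:ℕ) : ZMod (p^2)))^2 := hc3
        _ = rvg k ((r:ℕ) : ZMod (p^2))
            + ((p:ℕ) : ZMod (p^2)) * ((Polynomial.derivative (rvG k)).eval ((r:ℕ) : ZMod (p^2))) := by
            rw [rvG_eval, hz3]; ring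
    linear_combination E1 - E2 - E0
  -- the A sums
  have hAsum : ∀ s : ℕ, s < p →
      ∑ k ∈ range p, ((((k.factorial : ZMod (p^2)))^2)⁻¹ * ((-1)^k * rvg k ((s:ℕ) : ZMod (p^2))))
        = (((-1:ℤ)^s : ℤ) : ZMod (p^2)) := by
    intro s hs
    have e : ∀ k ∈ range p,
        (((k.factorial : ZMod (p^2)))^2)⁻¹ * ((-1)^k * rvg k ((s:ℕ) : ZMod (p^2)))
          = (((-1:ℤ)^k * (s.choose k) * ((s+k).choose k) : ℤ) : ZMod (p^2)) := by
      intro k hk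
      have hk' : k < p := mem_range.mp hk
      have hfu : IsUnit (((k.factorial : ZMod (p^2)))^2) := (ufact k hk').pow 2
      rw [rvg_nat]
      push_cast
      calc (((k.factorial : ZMod (p^2)))^2)⁻¹ *
            ((-1)^k * ((k.factorial : ZMod (p^2))^2 * (s.choose k : ZMod (p^2)) * ((s+k).choose k : ZMod (p^2))))
          = ((((k.factorial : ZMod (p^2)))^2)⁻¹ * ((k.factorial : ZMod (p^2)))^2) *
            ((-1)^k * (s.choose k : ZMod (p^2)) * ((s+k).choose k : ZMod (p^2))) := by ring
        _ = (-1)^k * (s.choose k : ZMod (p^2)) * ((s+k).choose k : ZMod (p^2)) := by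
            rw [ZMod.inv_mul_of_unit _ hfu, one_mul]
    rw [Finset.sum_congr rfl e]
    rw [← Int.cast_sum]
    rw [rv_sum_trunc s p hs]
  -- assemble
  have hS1 : (∑ k ∈ Finset.range p,
      ((Nat.choose (4 * k) (2 * k) : ZMod (p ^ 2)) * (Nat.choose (2 * k) k : ZMod (p ^ 2)) *
        ((64 : ZMod (p ^ 2))⁻¹) ^ k))
      = (((-1:ℤ)^r : ℤ) : ZMod (p ^ 2))
        + t * ∑ k ∈ range p, ((((k.factorial : ZMod (p^2)))^2)⁻¹ *
            ((-1)^k * ((Polynomial.derivative (rvG k)).eval ((r:ℕ) : ZMod (p^2))))) := by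
    rw [Finset.sum_congr rfl hterm]
    rw [← hAsum r hr, Finset.mul_sum, ← Finset.sum_add_distrib]
    apply Finset.sum_congr rfl
    intro k _
    rw [hexp k]
    ring
  have hS2 : (∑ k ∈ Finset.range p,
      ((Nat.choose (4 * k) (2 * k) : ZMod (p ^ 2)) * (Nat.choose (2 * k) k : ZMod (p ^ 2)) *
        ((64 : ZMod (p ^ 2))⁻¹) ^ k))
      = (((-1:ℤ)^r' : ℤ) : ZMod (p ^ 2))
        + t' * ∑ k ∈ range p, ((((k.factorial : ZMod (p^2)))^2)⁻¹ *
            ((-1)^k * ((Polynomial.derivative (rvG k)).eval ((r':ℕ) : ZMod (p^2))))) := by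
    rw [Finset.sum_congr rfl hterm]
    rw [← hAsum r' hr', Finset.mul_sum, ← Finset.sum_add_distrib]
    apply Finset.sum_congr rfl
    intro k _
    rw [hexp' k]
    ring
  obtain ⟨D, hDdef⟩ : ∃ x : ZMod (p^2), x = ∑ k ∈ range p, ((((k.factorial : ZMod (p^2)))^2)⁻¹ *
      ((-1)^k * ((Polynomial.derivative (rvG k)).eval ((r:ℕ) : ZMod (p^2))))) := ⟨_, rfl⟩
  obtain ⟨D', hD'def⟩ : ∃ x : ZMod (p^2), x = ∑ k ∈ range p, ((((k.factorial : ZMod (p^2)))^2)⁻¹ *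
      ((-1)^k * ((Polynomial.derivative (rvG k)).eval ((r':ℕ) : ZMod (p^2))))) := ⟨_, rfl⟩
  -- parity
  have hpar : ((-1:ℤ)^r) = ((-1:ℤ)^r') := by
    have hodd : p % 2 = 1 := by
      rcases hp.eq_two_or_odd with h | h
      · omega
      · exact h
    have heven : (r + r') % 2 = 0 := by omega
    have h2 : (-1:ℤ)^(r+r') = 1 := Even.neg_one_pow (Nat.even_iff.mpr heven)
    have h3 : (-1:ℤ)^r' * (-1:ℤ)^r' = 1 := by
      rw [← pow_add, ← two_mul, pow_mul]; norm_num
    calc (-1:ℤ)^r = (-1:ℤ)^r * ((-1:ℤ)^r' * (-1:ℤ)^r') := by rw [h3, mul_one]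
      _ = ((-1:ℤ)^(r+r')) * (-1:ℤ)^r' := by rw [pow_add]; ring
      _ = (-1:ℤ)^r' := by rw [h2, one_mul]
  -- p*D = -p*D'
  have hpD : ((p:ℕ) : ZMod (p^2)) * D = -(((p:ℕ) : ZMod (p^2)) * D') := by
    rw [hDdef, hD'def, Finset.mul_sum, Finset.mul_sum, ← Finset.sum_neg_distrib]
    apply Finset.sum_congr rfl
    intro k _
    have := hgamma k
    calc ((p:ℕ) : ZMod (p^2)) * ((((k.factorial : ZMod (p^2)))^2)⁻¹ *
          ((-1)^k * ((Polynomial.derivative (rvG k)).eval ((r:ℕ) : ZMod (p^2)))))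
        = (((k.factorial : ZMod (p^2)))^2)⁻¹ * (-1)^k *
          (((p:ℕ) : ZMod (p^2)) * ((Polynomial.derivative (rvG k)).eval ((r:ℕ) : ZMod (p^2)))) := by ring
      _ = (((k.factorial : ZMod (p^2)))^2)⁻¹ * (-1)^k *
          (-(((p:ℕ) : ZMod (p^2)) * ((Polynomial.derivative (rvG k)).eval ((r':ℕ) : ZMod (p^2))))) := by
          rw [this]
      _ = -(((p:ℕ) : ZMod (p^2)) * ((((k.factorial : ZMod (p^2)))^2)⁻¹ *
          ((-1)^k * ((Polynomial.derivative (rvG k)).eval ((r':ℕ) : ZMod (p^2)))))) := by ring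
  -- t*D = t'*D'
  have htD : t * D = t' * D' := by
    have e := hS1.symm.trans hS2
    have hparc : (((-1:ℤ)^r : ℤ) : ZMod (p^2)) = (((-1:ℤ)^r' : ℤ) : ZMod (p^2)) := by
      rw [hpar]
    rw [← hparc] at e
    rw [hDdef, hD'def]
    linear_combination e
  -- conclude p*D = 0
  have hpD0 : ((p:ℕ) : ZMod (p^2)) * D = 0 := by
    have e4 : (4:ZMod (p^2)) * (t * D) = -(((δ:ℕ) : ZMod (p^2))) * (((p:ℕ) : ZMod (p^2)) * D) := by
      calc (4:ZMod (p^2)) * (t * D) = ((4:ZMod (p^2)) * t) * D := by ring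
        _ = -(((δ:ℕ) : ZMod (p^2)) * ((p:ℕ) : ZMod (p^2))) * D := by rw [ht4]
        _ = -(((δ:ℕ) : ZMod (p^2))) * (((p:ℕ) : ZMod (p^2)) * D) := by ring
    have e4' : (4:ZMod (p^2)) * (t' * D') = (((δ':ℕ) : ZMod (p^2))) * (((p:ℕ) : ZMod (p^2)) * D) := by
      calc (4:ZMod (p^2)) * (t' * D') = ((4:ZMod (p^2)) * t') * D' := by ring
        _ = -(((δ':ℕ) : ZMod (p^2)) * ((p:ℕ) : ZMod (p^2))) * D' := by rw [ht4']
        _ = -(((δ':ℕ) : ZMod (p^2))) * (((p:ℕ) : ZMod (p^2)) * D') := by ring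
        _ = -(((δ':ℕ) : ZMod (p^2))) * (-(((p:ℕ) : ZMod (p^2)) * D)) := by
            have hpD' : ((p:ℕ) : ZMod (p^2)) * D' = -(((p:ℕ) : ZMod (p^2)) * D) := by
              linear_combination hpD
            rw [hpD']
        _ = (((δ':ℕ) : ZMod (p^2))) * (((p:ℕ) : ZMod (p^2)) * D) := by ring
    have hδδ' : ((δ:ℕ) : ZMod (p^2)) + ((δ':ℕ) : ZMod (p^2)) = 4 := by
      have hc := congrArg (fun z : ℕ => (z : ZMod (p^2))) h3
      push_cast at hc
      linear_combination hc
    have e5 : (4:ZMod (p^2)) * (((p:ℕ) : ZMod (p^2)) * D) = 0 := by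
      have := htD
      calc (4:ZMod (p^2)) * (((p:ℕ) : ZMod (p^2)) * D)
          = (((δ:ℕ) : ZMod (p^2)) + ((δ':ℕ) : ZMod (p^2))) * (((p:ℕ) : ZMod (p^2)) * D) := by
            rw [hδδ']
        _ = ((δ:ℕ) : ZMod (p^2)) * (((p:ℕ) : ZMod (p^2)) * D)
            + ((δ':ℕ) : ZMod (p^2)) * (((p:ℕ) : ZMod (p^2)) * D) := by ring
        _ = -((4:ZMod (p^2)) * (t * D)) + (4:ZMod (p^2)) * (t' * D') := by
            rw [e4, e4']; ring
        _ = 0 := by rw [htD]; ring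
    apply u4.mul_left_cancel
    rw [e5, mul_zero]
  have htD0 : t * D = 0 := by
    apply u4.mul_left_cancel
    have e4 : (4:ZMod (p^2)) * (t * D) = -(((δ:ℕ) : ZMod (p^2))) * (((p:ℕ) : ZMod (p^2)) * D) := by
      calc (4:ZMod (p^2)) * (t * D) = ((4:ZMod (p^2)) * t) * D := by ring
        _ = -(((δ:ℕ) : ZMod (p^2)) * ((p:ℕ) : ZMod (p^2))) * D := by rw [ht4]
        _ = -(((δ:ℕ) : ZMod (p^2))) * (((p:ℕ) : ZMod (p^2)) * D) := by ring
    rw [e4, hpD0, mul_zero, mul_zero]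
  rw [hS1, ← hDdef, htD0, add_zero]

end Main

theorem rodriguez_villegas_64 (p : ℕ) (hp : p.Prime) (hp3 : 3 < p) :
    (∑ k ∈ Finset.range p,
      ((Nat.choose (4 * k) (2 * k) : ZMod (p ^ 2)) * (Nat.choose (2 * k) k : ZMod (p ^ 2)) *
        ((64 : ZMod (p ^ 2))⁻¹) ^ k))
      = ((@legendreSym p ⟨hp⟩ (-2) : ℤ) : ZMod (p ^ 2)) := by
  haveI : Fact p.Prime := ⟨hp⟩
  have hp2 : p ≠ 2 := by omega
  have hodd : p % 2 = 1 := by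
    rcases hp.eq_two_or_odd with h | h
    · omega
    · exact h
  have hL : (@legendreSym p ⟨hp⟩ (-2) : ℤ) = ZMod.χ₈' (p : ZMod 8) := legendreSym.at_neg_two hp2
  have hχ := ZMod.χ₈'_nat_eq_if_mod_eight p
  have h4 : p % 4 = 1 ∨ p % 4 = 3 := by omega
  rcases h4 with h4 | h4
  · have key := rv_main p hp hp3 (p/4) (3*(p/4)) 1 3 (by omega) (by omega) (by omega)
    rw [key, hL, hχ]
    rw [if_neg (by omega : ¬ p % 2 = 0)]
    have h8 : p % 8 = 1 ∨ p % 8 = 5 := by omega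
    rcases h8 with h8 | h8
    · rw [if_pos (Or.inl h8)]
      congr 1
      have he : Even (p/4) := Nat.even_iff.mpr (by omega)
      rw [he.neg_one_pow]
    · rw [if_neg (by omega)]
      congr 1
      have he : Odd (p/4) := Nat.odd_iff.mpr (by omega)
      rw [he.neg_one_pow]
  · have key := rv_main p hp hp3 (3*(p/4)+2) (p/4) 3 1 (by omega) (by omega) (by omega)
    rw [key, hL, hχ]
    rw [if_neg (by omega : ¬ p % 2 = 0)]
    have h8 : p % 8 = 3 ∨ p % 8 = 7 := by omega
    rcases h8 with h8 | h8
    · rw [if_pos (Or.inr h8)]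
      congr 1
      have he : Even (3*(p/4)+2) := Nat.even_iff.mpr (by omega)
      rw [he.neg_one_pow]
    · rw [if_neg (by omega)]
      congr 1
      have he : Odd (3*(p/4)+2) := Nat.odd_iff.mpr (by omega)
      rw [he.neg_one_pow]
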